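/- Let s, x, y be three distinct vertices in a finite connected chordal graph. If s is simplicial and the line determined by s and x equals the line determined by s and y, then the line determined by x and y consists of all the vertices of the graph. -/

import Mathlib

/-- `b` lies between `a` and `c` in the metric space induced by a graph `G`. -/
def SimpleGraph.Btw {V : Type*} (G : SimpleGraph V) (a b c : V) : Prop :=
  a ≠ b ∧ b ≠ c ∧ a ≠ c ∧ G.dist a b + G.dist b c = G.dist a c

/-- The line determined by two distinct vertices `u` and `v`. -/
def SimpleGraph.line {V : Type*} (G : SimpleGraph V) (u v : V) : Set V :=
  {u, v} ∪ {p | G.Btw p u v ∨ G.Btw u p v ∨ G.Btw u v p}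

/-- A graph is chordal if every cycle of length at least four has a chord;
equivalently, it contains no induced cycle of length at least four. -/
def SimpleGraph.IsChordal {V : Type*} (G : SimpleGraph V) : Prop :=
  ∀ n : ℕ, 4 ≤ n → IsEmpty (SimpleGraph.cycleGraph n ↪g G)

/-- A vertex is simplicial if its neighbours are pairwise adjacent. -/
def SimpleGraph.IsSimplicialVertex {V : Type*} (G : SimpleGraph V) (s : V) : Prop :=
  ∀ a b : V, G.Adj s a → G.Adj s b → a ≠ b → G.Adj a b

namespace StmtAux

open SimpleGraph

variable {V : Type*} {G : SimpleGraph V}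

lemma adj_dist_le' (hconn : G.Connected) (w : V) {a b : V} (h : G.Adj a b) :
    G.dist w a ≤ G.dist w b + 1 := by
  have h1 : G.dist b a = 1 := (G.dist_eq_one_iff_adj).mpr h.symm
  have := hconn.dist_triangle (u := w) (v := b) (w := a)
  omega

/-- A geodesic chain from `u` to `w`. -/
lemma exists_chain' (hconn : G.Connected) (u w : V) :
    ∃ c : ℕ → V, c 0 = u ∧ c (G.dist u w) = w ∧
      (∀ l, l < G.dist u w → G.Adj (c l) (c (l + 1))) ∧
      (∀ l, l ≤ G.dist u w → G.dist w (c l) + l = G.dist u w) ∧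
      (∀ l, l ≤ G.dist u w → G.dist u (c l) ≤ l) := by
  obtain ⟨p, hp⟩ := hconn.exists_walk_length_eq_dist u w
  refine ⟨p.getVert, p.getVert_zero, by rw [← hp]; exact p.getVert_length, ?_, ?_, ?_⟩
  · intro l hl
    exact p.adj_getVert_succ (by omega)
  · -- distance to w
    have hup : ∀ l, l ≤ G.dist u w → G.dist u (p.getVert l) ≤ l := by
      intro l hl
      induction l with
      | zero => simp [p.getVert_zero]
      | succ n ih =>
        have h1 : G.dist u (p.getVert n) ≤ n := ih (by omega)
        have h2 : G.Adj (p.getVert n) (p.getVert (n + 1)) := p.adj_getVert_succ (by omega)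
        have := adj_dist_le' hconn u h2.symm
        omega
    have hdown : ∀ j l, l + j = G.dist u w → G.dist w (p.getVert l) ≤ j := by
      intro j
      induction j with
      | zero =>
        intro l hl
        have : p.getVert l = w := p.getVert_of_length_le (by omega)
        simp [this]
      | succ n ih =>
        intro l hl
        have h2 : G.Adj (p.getVert l) (p.getVert (l + 1)) := p.adj_getVert_succ (by omega)
        have h3 := ih (l + 1) (by omega)
        have := adj_dist_le' hconn w h2
        omega
    intro l hl
    have h1 := hup l hl
    have h2 := hdown (G.dist u w - l) l (by omega)
    have h3 := hconn.dist_triangle (u := u) (v := p.getVert l) (w := w)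
    have h4 : G.dist (p.getVert l) w = G.dist w (p.getVert l) := G.dist_comm
    omega
  · intro l hl
    -- repeat of hup; cheap to redo
    induction l with
    | zero => simp [p.getVert_zero]
    | succ n ih =>
      have h1 : G.dist u (p.getVert n) ≤ n := ih (by omega)
      have h2 : G.Adj (p.getVert n) (p.getVert (n + 1)) := p.adj_getVert_succ (by omega)
      have := adj_dist_le' hconn u h2.symm
      omega

lemma dist_eq_zero (hconn : G.Connected) {a b : V} (h : G.dist a b = 0) : a = b :=
  (hconn.dist_eq_zero_iff).mp h

/-- From chordality: every cycle of length at least 4 (given as a function on `ℕ`)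
has a chord. -/
lemma chord' (hG : G.IsChordal) {n : ℕ} (hn : 4 ≤ n) (c : ℕ → V)
    (hinj : ∀ i < n, ∀ j < n, c i = c j → i = j)
    (hadj : ∀ i, i + 1 < n → G.Adj (c i) (c (i + 1)))
    (hclose : G.Adj (c (n - 1)) (c 0)) :
    ∃ i j, i < j ∧ j < n ∧ G.Adj (c i) (c j) ∧ j ≠ i + 1 ∧ ¬(i = 0 ∧ j = n - 1) := by
  by_contra hcon
  push_neg at hcon
  have hNeZero : NeZero n := ⟨by omega⟩
  have subval : ∀ i j : Fin n, (i - j).val = (n - j.val + i.val) % n := by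
    intro i j; rw [Fin.sub_def]
  have onemod : (1 : ℕ) % n = 1 := Nat.mod_eq_of_lt (by omega)
  refine (hG n hn).elim ⟨⟨fun t : Fin n => c t.val, ?_⟩, ?_⟩
  · intro a b hab
    exact Fin.ext (hinj _ a.2 _ b.2 hab)
  · intro a b
    show G.Adj (c a.val) (c b.val) ↔ (cycleGraph n).Adj a b
    constructor
    · -- G.Adj → cycle adj
      intro hadjab
      have hne : a.val ≠ b.val := fun h => (G.ne_of_adj hadjab) (congrArg c h)
      rw [cycleGraph_adj']
      have key : ∀ i j : ℕ, i < j → j < n → G.Adj (c i) (c j) →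
          (j = i + 1 ∨ (i = 0 ∧ j = n - 1)) := by
        intro i j hij hjn hadj'
        have h1 := hcon i j hij hjn hadj'
        by_contra hk
        push_neg at hk
        exact hk.2 (by tauto) (by tauto)
      have ha := a.2
      have hb := b.2
      rcases Nat.lt_or_ge a.val b.val with h | h
      · rcases key a.val b.val h b.2 hadjab with h1 | h1
        · right
          rw [subval]
          have h2 : n - a.val + b.val = n + 1 := by omega
          rw [h2, Nat.add_mod_left, onemod]
        · left
          rw [subval]
          have h2 : n - b.val + a.val = 1 := by omega
          rw [h2, onemod]
      · have h' : b.val < a.val := by omega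
        rcases key b.val a.val h' a.2 hadjab.symm with h1 | h1
        · left
          rw [subval]
          have h2 : n - b.val + a.val = n + 1 := by omega
          rw [h2, Nat.add_mod_left, onemod]
        · right
          rw [subval]
          have h2 : n - a.val + b.val = 1 := by omega
          rw [h2, onemod]
    · -- cycle adj → G.Adj
      intro hab
      rw [cycleGraph_adj'] at hab
      have hsub : ∀ i j : Fin n, (i - j).val = 1 → G.Adj (c j.val) (c i.val) := by
        intro i j hij
        rw [subval] at hij
        have hi := i.2
        have hj := j.2
        rcases Nat.lt_or_ge i.val j.val with h | h
        · have h2 : (n - j.val + i.val) % n = n - j.val + i.val :=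
            Nat.mod_eq_of_lt (by omega)
          rw [h2] at hij
          have hij0 : j.val = n - 1 ∧ i.val = 0 := by omega
          rw [hij0.1, hij0.2]
          exact hclose
        · rcases Nat.eq_or_lt_of_le h with h | h
          · exfalso
            have h2 : n - j.val + i.val = n := by omega
            rw [h2, Nat.mod_self] at hij
            omega
          · have h2 : n - j.val + i.val = (i.val - j.val) + n := by omega
            rw [h2, Nat.add_mod_right, Nat.mod_eq_of_lt (by omega)] at hij
            have h3 : i.val = j.val + 1 := by omega
            rw [h3]
            exact hadj j.val (by omega)
      rcases hab with h | h
      · exact (hsub a b h).symm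
      · exact hsub b a h
lemma tc_aux (hconn : G.Connected) (hG : G.IsChordal) (w : V) (k : ℕ) :
    ∀ N : ℕ, ∀ i i' : ℕ, ∀ p q : ℕ → V, i + i' ≤ N →
    1 ≤ i → i ≤ k → 1 ≤ i' → i' ≤ k →
    G.Adj (p 0) (q 0) →
    (∀ l, l < i → G.Adj (p l) (p (l + 1))) →
    (∀ l, l ≤ i → G.dist w (p l) + l = k) →
    (∀ l, l < i' → G.Adj (q l) (q (l + 1))) →
    (∀ l, l ≤ i' → G.dist w (q l) + l = k) →
    (p i = q i' ∨ G.Adj (p i) (q i')) →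
    ∃ z, G.Adj (p 0) z ∧ G.Adj (q 0) z ∧ G.dist w z + 1 = k := by
  intro N
  induction N with
  | zero => intro i i' p q hN hi1 _ _ _ _ _ _ _ _ _; omega
  | succ N IH =>
    intro i i' p q hN hi1 hik hi'1 hi'k huv hpa hpd hqa hqd hend
    -- injectivity helpers
    have hql : ∀ l r, l ≤ i → r ≤ i' → p l = q r → l = r := by
      intro l r hl hr he
      have h1 := hpd l hl
      have h2 := hqd r hr
      rw [he] at h1; omega
    have hpinj : ∀ l r, l ≤ i → r ≤ i → p l = p r → l = r := by
      intro l r hl hr he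
      have h1 := hpd l hl
      have h2 := hpd r hr
      rw [he] at h1; omega
    have hqinj : ∀ l r, l ≤ i' → r ≤ i' → q l = q r → l = r := by
      intro l r hl hr he
      have h1 := hqd l hl
      have h2 := hqd r hr
      rw [he] at h1; omega
    by_cases hmeet : ∃ l, l ≤ i ∧ ∃ r, r ≤ i' ∧ ¬(l = i ∧ r = i') ∧ p l = q r
    · obtain ⟨l, hl, r, hr, hnotend, he⟩ := hmeet
      have hlr : l = r := hql l r hl hr he
      have hl1 : 1 ≤ l := by
        rcases Nat.eq_zero_or_pos l with h0 | h0
        · exfalso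
          have : p 0 = q 0 := by rw [← h0, he, ← hlr, h0]
          exact G.ne_of_adj huv this
        · exact h0
      refine IH l l p q (by omega) hl1 (by omega) (by omega) (by omega) huv
        (fun t ht => hpa t (by omega)) (fun t ht => hpd t (by omega))
        (fun t ht => hqa t (by omega)) (fun t ht => hqd t (by omega))
        (Or.inl (by rw [he, hlr]))
    · push_neg at hmeet
      have hdisj : ∀ l, l ≤ i → ∀ r, r ≤ i' → ¬(l = i ∧ r = i') → p l ≠ q r := by
        intro l hl r hr hne
        exact hmeet l hl r hr (fun h1 h2 => hne ⟨h1, h2⟩)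
      -- adjacency level helper
      have hlevel : ∀ l r, l ≤ i → r ≤ i' → G.Adj (p l) (q r) →
          (l ≤ r + 1 ∧ r ≤ l + 1) := by
        intro l r hl hr hadj
        have h1 := adj_dist_le' hconn w hadj
        have h2 := adj_dist_le' hconn w hadj.symm
        have h3 := hpd l hl
        have h4 := hqd r hr
        omega
      rcases hend with heq | hadjE
      · -- p i = q i'
        have hii' : i = i' := hql i i' le_rfl le_rfl heq
        subst hii'
        by_cases hi_one : i = 1
        · subst hi_one
          refine ⟨p 1, ?_, ?_, ?_⟩
          · exact hpa 0 (by omega)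
          · rw [heq]
            exact hqa 0 (by omega)
          · exact hpd 1 (by omega)
        · have hi2 : 2 ≤ i := by omega
          set n := 2 * i + 1 with hn_def
          set cf : ℕ → V := fun t => if t ≤ i then p t else q (2 * i - t) with hcf
          have cdefp : ∀ t, t ≤ i → cf t = p t := by
            intro t ht; simp only [hcf]; rw [if_pos ht]
          have cdefq : ∀ t, i < t → cf t = q (2 * i - t) := by
            intro t ht; simp only [hcf]; rw [if_neg (by omega)]
          obtain ⟨t1, t2, ht12, ht2n, hadjc, hnsucc, hnwrap⟩ := by
            refine chord' hG (n := n) (by omega) cf ?_ ?_ ?_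
            · intro a ha b hb he
              by_cases ha' : a ≤ i <;> by_cases hb' : b ≤ i
              · rw [cdefp a ha', cdefp b hb'] at he
                exact hpinj a b ha' hb' he
              · rw [cdefp a ha', cdefq b (by omega)] at he
                exact absurd he (hdisj a ha' (2*i-b) (by omega) (by omega))
              · rw [cdefq a (by omega), cdefp b hb'] at he
                exact absurd he.symm (hdisj b hb' (2*i-a) (by omega) (by omega))
              · rw [cdefq a (by omega), cdefq b (by omega)] at he
                have := hqinj _ _ (by omega) (by omega) he
                omega
            · intro t ht
              rcases Nat.lt_trichotomy t i with h | h | h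
              · rw [cdefp t (by omega), cdefp (t+1) (by omega)]
                exact hpa t h
              · rw [cdefp t (by omega), cdefq (t+1) (by omega), h]
                rw [show 2 * i - (i + 1) = i - 1 by omega, heq]
                have := (hqa (i-1) (by omega)).symm
                rwa [show i - 1 + 1 = i by omega] at this
              · rw [cdefq t (by omega), cdefq (t+1) (by omega)]
                have := (hqa (2*i - t - 1) (by omega)).symm
                rw [show 2*i - t - 1 + 1 = 2*i - t by omega] at this
                rw [show 2*i - (t+1) = 2*i - t - 1 by omega]
                exact this
            · rw [show n - 1 = 2*i by omega, cdefq (2*i) (by omega),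
                  show 2*i - 2*i = 0 by omega, cdefp 0 (by omega)]
              exact huv.symm
          -- decode the chord
          by_cases h1 : t1 ≤ i <;> by_cases h2 : t2 ≤ i
          · exfalso
            rw [cdefp t1 h1, cdefp t2 h2] at hadjc
            have ha := adj_dist_le' hconn w hadjc
            have hb := adj_dist_le' hconn w hadjc.symm
            have h3 := hpd t1 h1
            have h4 := hpd t2 h2
            omega
          · -- t1 ≤ i < t2 : mixed
            rw [cdefp t1 h1, cdefq t2 (by omega)] at hadjc
            set r := 2 * i - t2 with hr_def
            have hri : r ≤ i - 1 := by omega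
            have hlev := hlevel t1 r h1 (by omega) hadjc
            by_cases hz1 : t1 = 0
            · subst hz1
              have hr1 : r = 1 := by
                rcases Nat.lt_or_ge r 1 with h | h
                · exfalso; exact hnwrap ⟨rfl, by omega⟩
                · omega
              refine ⟨q 1, ?_, ?_, ?_⟩
              · rw [← hr1]; exact hadjc
              · exact hqa 0 (by omega)
              · exact hqd 1 (by omega)
            · by_cases hz2 : r = 0
              · have ht1_1 : t1 = 1 := by omega
                refine ⟨p 1, ?_, ?_, ?_⟩
                · exact hpa 0 (by omega)
                · rw [← ht1_1]
                  exact (hz2 ▸ hadjc).symm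
                · exact hpd 1 (by omega)
              · refine IH t1 r p q (by omega) (by omega) (by omega) (by omega) (by omega)
                  huv (fun t ht => hpa t (by omega)) (fun t ht => hpd t (by omega))
                  (fun t ht => hqa t (by omega)) (fun t ht => hqd t (by omega))
                  (Or.inr hadjc)
          · omega
          · -- both > i
            exfalso
            rw [cdefq t1 (by omega), cdefq t2 (by omega)] at hadjc
            have ha := adj_dist_le' hconn w hadjc
            have hb := adj_dist_le' hconn w hadjc.symm
            have h3 := hqd (2*i - t1) (by omega)
            have h4 := hqd (2*i - t2) (by omega)
            omega
      · -- G.Adj (p i) (q i')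
        have hpiq : p i ≠ q i' := G.ne_of_adj hadjE
        set n := i + i' + 2 with hn_def
        set cf : ℕ → V := fun t => if t ≤ i then p t else q (i + i' + 1 - t) with hcf
        have cdefp : ∀ t, t ≤ i → cf t = p t := by
          intro t ht; simp only [hcf]; rw [if_pos ht]
        have cdefq : ∀ t, i < t → cf t = q (i + i' + 1 - t) := by
          intro t ht; simp only [hcf]; rw [if_neg (by omega)]
        obtain ⟨t1, t2, ht12, ht2n, hadjc, hnsucc, hnwrap⟩ := by
          refine chord' hG (n := n) (by omega) cf ?_ ?_ ?_
          · intro a ha b hb he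
            by_cases ha' : a ≤ i <;> by_cases hb' : b ≤ i
            · rw [cdefp a ha', cdefp b hb'] at he
              exact hpinj a b ha' hb' he
            · rw [cdefp a ha', cdefq b (by omega)] at he
              by_cases hx : a = i ∧ i + i' + 1 - b = i'
              · exfalso; rw [hx.1, hx.2] at he; exact hpiq he
              · exact absurd he (hdisj a ha' _ (by omega) hx)
            · rw [cdefq a (by omega), cdefp b hb'] at he
              by_cases hx : b = i ∧ i + i' + 1 - a = i'
              · exfalso; rw [hx.1, hx.2] at he; exact hpiq he.symm
              · exact absurd he.symm (hdisj b hb' _ (by omega) hx)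
            · rw [cdefq a (by omega), cdefq b (by omega)] at he
              have := hqinj _ _ (by omega) (by omega) he
              omega
          · intro t ht
            rcases Nat.lt_trichotomy t i with h | h | h
            · rw [cdefp t (by omega), cdefp (t+1) (by omega)]
              exact hpa t h
            · rw [cdefp t (by omega), cdefq (t+1) (by omega), h]
              rw [show i + i' + 1 - (i + 1) = i' by omega]
              exact hadjE
            · rw [cdefq t (by omega), cdefq (t+1) (by omega)]
              have := (hqa (i + i' + 1 - t - 1) (by omega)).symm
              rw [show i + i' + 1 - t - 1 + 1 = i + i' + 1 - t by omega] at this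
              rw [show i + i' + 1 - (t+1) = i + i' + 1 - t - 1 by omega]
              exact this
          · rw [show n - 1 = i + i' + 1 by omega, cdefq (i+i'+1) (by omega),
                show i + i' + 1 - (i+i'+1) = 0 by omega, cdefp 0 (by omega)]
            exact huv.symm
        by_cases h1 : t1 ≤ i <;> by_cases h2 : t2 ≤ i
        · exfalso
          rw [cdefp t1 h1, cdefp t2 h2] at hadjc
          have ha := adj_dist_le' hconn w hadjc
          have hb := adj_dist_le' hconn w hadjc.symm
          have h3 := hpd t1 h1
          have h4 := hpd t2 h2
          omega
        · rw [cdefp t1 h1, cdefq t2 (by omega)] at hadjc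
          set r := i + i' + 1 - t2 with hr_def
          have hri : r ≤ i' := by omega
          have hlev := hlevel t1 r h1 hri hadjc
          have hnotend : ¬(t1 = i ∧ r = i') := by
            intro ⟨hx1, hx2⟩
            have : t2 = i + 1 := by omega
            exact hnsucc (by omega)
          by_cases hz1 : t1 = 0
          · subst hz1
            have hr1 : r = 1 := by
              rcases Nat.lt_or_ge r 1 with h | h
              · exfalso; exact hnwrap ⟨rfl, by omega⟩
              · omega
            refine ⟨q 1, ?_, ?_, ?_⟩
            · rw [← hr1]; exact hadjc
            · exact hqa 0 (by omega)
            · exact hqd 1 (by omega)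
          · by_cases hz2 : r = 0
            · have ht1_1 : t1 = 1 := by omega
              refine ⟨p 1, ?_, ?_, ?_⟩
              · exact hpa 0 (by omega)
              · rw [← ht1_1]
                exact (hz2 ▸ hadjc).symm
              · exact hpd 1 (by omega)
            · refine IH t1 r p q (by omega) (by omega) (by omega) (by omega) (by omega)
                huv (fun t ht => hpa t (by omega)) (fun t ht => hpd t (by omega))
                (fun t ht => hqa t (by omega)) (fun t ht => hqd t (by omega))
                (Or.inr hadjc)
        · omega
        · exfalso
          rw [cdefq t1 (by omega), cdefq t2 (by omega)] at hadjc
          have ha := adj_dist_le' hconn w hadjc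
          have hb := adj_dist_le' hconn w hadjc.symm
          have h3 := hqd (i + i' + 1 - t1) (by omega)
          have h4 := hqd (i + i' + 1 - t2) (by omega)
          omega
lemma qc_aux (hconn : G.Connected) (hG : G.IsChordal) (w tp : V) (k : ℕ) :
    ∀ N : ℕ, ∀ i i' : ℕ, ∀ p q : ℕ → V, i + i' ≤ N →
    1 ≤ i → i ≤ k → 1 ≤ i' → i' ≤ k →
    p 0 ≠ q 0 →
    G.Adj tp (p 0) → G.Adj tp (q 0) → G.dist w tp = k + 1 →
    (∀ l, l < i → G.Adj (p l) (p (l + 1))) →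
    (∀ l, l ≤ i → G.dist w (p l) + l = k) →
    (∀ l, l < i' → G.Adj (q l) (q (l + 1))) →
    (∀ l, l ≤ i' → G.dist w (q l) + l = k) →
    (p i = q i' ∨ G.Adj (p i) (q i')) →
    (∃ z, G.Adj (p 0) z ∧ G.Adj (q 0) z ∧ G.dist w z + 1 = k) ∨ G.Adj (p 0) (q 0) := by
  intro N
  induction N with
  | zero => intro i i' p q hN hi1 _ _ _ _ _ _ _ _ _ _ _ _; omega
  | succ N IH =>
    intro i i' p q hN hi1 hik hi'1 hi'k hne0 htu htv htd hpa hpd hqa hqd hend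
    have hql : ∀ l r, l ≤ i → r ≤ i' → p l = q r → l = r := by
      intro l r hl hr he
      have h1 := hpd l hl
      have h2 := hqd r hr
      rw [he] at h1; omega
    have hpinj : ∀ l r, l ≤ i → r ≤ i → p l = p r → l = r := by
      intro l r hl hr he
      have h1 := hpd l hl
      have h2 := hpd r hr
      rw [he] at h1; omega
    have hqinj : ∀ l r, l ≤ i' → r ≤ i' → q l = q r → l = r := by
      intro l r hl hr he
      have h1 := hqd l hl
      have h2 := hqd r hr
      rw [he] at h1; omega
    have htp : ∀ l, l ≤ i → p l ≠ tp := by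
      intro l hl he
      have h1 := hpd l hl
      rw [he, htd] at h1; omega
    have htq : ∀ l, l ≤ i' → q l ≠ tp := by
      intro l hl he
      have h1 := hqd l hl
      rw [he, htd] at h1; omega
    by_cases hmeet : ∃ l, l ≤ i ∧ ∃ r, r ≤ i' ∧ ¬(l = i ∧ r = i') ∧ p l = q r
    · obtain ⟨l, hl, r, hr, hnotend, he⟩ := hmeet
      have hlr : l = r := hql l r hl hr he
      have hl1 : 1 ≤ l := by
        rcases Nat.eq_zero_or_pos l with h0 | h0
        · exfalso
          have : p 0 = q 0 := by rw [← h0, he, ← hlr, h0]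
          exact hne0 this
        · exact h0
      refine IH l l p q (by omega) hl1 (by omega) (by omega) (by omega) hne0 htu htv htd
        (fun t ht => hpa t (by omega)) (fun t ht => hpd t (by omega))
        (fun t ht => hqa t (by omega)) (fun t ht => hqd t (by omega))
        (Or.inl (by rw [he, hlr]))
    · push_neg at hmeet
      have hdisj : ∀ l, l ≤ i → ∀ r, r ≤ i' → ¬(l = i ∧ r = i') → p l ≠ q r := by
        intro l hl r hr hne
        exact hmeet l hl r hr (fun h1 h2 => hne ⟨h1, h2⟩)
      have hlevel : ∀ l r, l ≤ i → r ≤ i' → G.Adj (p l) (q r) →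
          (l ≤ r + 1 ∧ r ≤ l + 1) := by
        intro l r hl hr hadj
        have h1 := adj_dist_le' hconn w hadj
        have h2 := adj_dist_le' hconn w hadj.symm
        have h3 := hpd l hl
        have h4 := hqd r hr
        omega
      have hlevtp : ∀ l, 1 ≤ l → l ≤ i → ¬ G.Adj (p l) tp := by
        intro l h1l hl hadj
        have h1 := adj_dist_le' hconn w hadj.symm
        have h3 := hpd l hl
        rw [htd] at h1; omega
      have hlevtq : ∀ l, 1 ≤ l → l ≤ i' → ¬ G.Adj (q l) tp := by
        intro l h1l hl hadj
        have h1 := adj_dist_le' hconn w hadj.symm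
        have h3 := hqd l hl
        rw [htd] at h1; omega
      rcases hend with heq | hadjE
      · have hii' : i = i' := hql i i' le_rfl le_rfl heq
        subst hii'
        by_cases hi_one : i = 1
        · subst hi_one
          refine Or.inl ⟨p 1, ?_, ?_, ?_⟩
          · exact hpa 0 (by omega)
          · rw [heq]
            exact hqa 0 (by omega)
          · exact hpd 1 (by omega)
        · have hi2 : 2 ≤ i := by omega
          set n := 2 * i + 2 with hn_def
          set cf : ℕ → V :=
            fun t => if t ≤ i then p t else if t ≤ 2 * i then q (2 * i - t) else tp with hcf
          have cdefp : ∀ t, t ≤ i → cf t = p t := by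
            intro t ht; simp only [hcf]; rw [if_pos ht]
          have cdefq : ∀ t, i < t → t ≤ 2 * i → cf t = q (2 * i - t) := by
            intro t ht ht2; simp only [hcf]; rw [if_neg (by omega), if_pos ht2]
          have cdeft : ∀ t, 2 * i < t → cf t = tp := by
            intro t ht; simp only [hcf]; rw [if_neg (by omega), if_neg (by omega)]
          obtain ⟨t1, t2, ht12, ht2n, hadjc, hnsucc, hnwrap⟩ := by
            refine chord' hG (n := n) (by omega) cf ?_ ?_ ?_
            · intro a ha b hb he
              rcases show a ≤ i ∨ (i < a ∧ a ≤ 2*i) ∨ a = 2*i+1 by omega with ha' | ha' | ha' <;>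
                rcases show b ≤ i ∨ (i < b ∧ b ≤ 2*i) ∨ b = 2*i+1 by omega with hb' | hb' | hb'
              · rw [cdefp a ha', cdefp b hb'] at he
                exact hpinj a b ha' hb' he
              · rw [cdefp a ha', cdefq b hb'.1 hb'.2] at he
                exact absurd he (hdisj a ha' (2*i-b) (by omega) (by omega))
              · rw [cdefp a ha', hb', cdeft (2*i+1) (by omega)] at he
                exact absurd he (htp a ha')
              · rw [cdefq a ha'.1 ha'.2, cdefp b hb'] at he
                exact absurd he.symm (hdisj b hb' (2*i-a) (by omega) (by omega))
              · rw [cdefq a ha'.1 ha'.2, cdefq b hb'.1 hb'.2] at he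
                have := hqinj _ _ (by omega) (by omega) he
                omega
              · rw [cdefq a ha'.1 ha'.2, hb', cdeft (2*i+1) (by omega)] at he
                exact absurd he (htq _ (by omega))
              · rw [ha', cdeft (2*i+1) (by omega), cdefp b hb'] at he
                exact absurd he.symm (htp b hb')
              · rw [ha', cdeft (2*i+1) (by omega), cdefq b hb'.1 hb'.2] at he
                exact absurd he.symm (htq _ (by omega))
              · omega
            · intro t ht
              rcases show t < i ∨ t = i ∨ (i < t ∧ t < 2*i) ∨ t = 2*i by omega
                with h | h | h | h
              · rw [cdefp t (by omega), cdefp (t+1) (by omega)]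
                exact hpa t h
              · rw [cdefp t (by omega), cdefq (t+1) (by omega) (by omega), h]
                rw [show 2 * i - (i + 1) = i - 1 by omega, heq]
                have := (hqa (i-1) (by omega)).symm
                rwa [show i - 1 + 1 = i by omega] at this
              · rw [cdefq t h.1 (by omega), cdefq (t+1) (by omega) (by omega)]
                have := (hqa (2*i - t - 1) (by omega)).symm
                rw [show 2*i - t - 1 + 1 = 2*i - t by omega] at this
                rw [show 2*i - (t+1) = 2*i - t - 1 by omega]
                exact this
              · rw [h, cdefq (2*i) (by omega) (by omega), cdeft (2*i+1) (by omega),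
                    show 2*i - 2*i = 0 by omega]
                exact htv.symm
            · rw [show n - 1 = 2*i+1 by omega, cdeft (2*i+1) (by omega), cdefp 0 (by omega)]
              exact htu
          rcases show t2 ≤ i ∨ (i < t2 ∧ t2 ≤ 2*i) ∨ t2 = 2*i+1 by omega with h2 | h2 | h2
          · -- both in p-part
            exfalso
            rw [cdefp t1 (by omega), cdefp t2 h2] at hadjc
            have ha := adj_dist_le' hconn w hadjc
            have hb := adj_dist_le' hconn w hadjc.symm
            have h3 := hpd t1 (by omega)
            have h4 := hpd t2 h2
            omega
          · rcases show t1 ≤ i ∨ (i < t1 ∧ t1 ≤ 2*i) by omega with h1 | h1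
            · -- mixed p-q
              rw [cdefp t1 h1, cdefq t2 h2.1 h2.2] at hadjc
              set r := 2 * i - t2 with hr_def
              have hri : r ≤ i - 1 := by omega
              have hlev := hlevel t1 r h1 (by omega) hadjc
              by_cases hz1 : t1 = 0
              · subst hz1
                by_cases hr0 : r = 0
                · rw [hr0] at hadjc
                  exact Or.inr hadjc
                · have hr1 : r = 1 := by omega
                  refine Or.inl ⟨q 1, ?_, ?_, ?_⟩
                  · rw [← hr1]; exact hadjc
                  · exact hqa 0 (by omega)
                  · exact hqd 1 (by omega)
              · by_cases hz2 : r = 0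
                · have ht1_1 : t1 = 1 := by omega
                  refine Or.inl ⟨p 1, ?_, ?_, ?_⟩
                  · exact hpa 0 (by omega)
                  · rw [← ht1_1]
                    exact (hz2 ▸ hadjc).symm
                  · exact hpd 1 (by omega)
                · refine IH t1 r p q (by omega) (by omega) (by omega) (by omega) (by omega)
                    hne0 htu htv htd
                    (fun t ht => hpa t (by omega)) (fun t ht => hpd t (by omega))
                    (fun t ht => hqa t (by omega)) (fun t ht => hqd t (by omega))
                    (Or.inr hadjc)
            · -- both in q-part
              exfalso
              rw [cdefq t1 h1.1 h1.2, cdefq t2 h2.1 h2.2] at hadjc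
              have ha := adj_dist_le' hconn w hadjc
              have hb := adj_dist_le' hconn w hadjc.symm
              have h3 := hqd (2*i - t1) (by omega)
              have h4 := hqd (2*i - t2) (by omega)
              omega
          · -- t2 is the apex
            exfalso
            rcases show t1 ≤ i ∨ (i < t1 ∧ t1 ≤ 2*i) by omega with h1 | h1
            · have ht1pos : 1 ≤ t1 := by
                rcases Nat.eq_zero_or_pos t1 with h0 | h0
                · exfalso; exact hnwrap ⟨h0, by omega⟩
                · exact h0
              rw [cdefp t1 h1, h2, cdeft (2*i+1) (by omega)] at hadjc
              exact hlevtp t1 ht1pos h1 hadjc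
            · have ht1lt : t1 < 2*i := by omega
              rw [cdefq t1 h1.1 h1.2, h2, cdeft (2*i+1) (by omega)] at hadjc
              exact hlevtq (2*i - t1) (by omega) (by omega) hadjc
      · -- adjacent ends
        have hpiq : p i ≠ q i' := G.ne_of_adj hadjE
        set n := i + i' + 3 with hn_def
        set cf : ℕ → V :=
          fun t => if t ≤ i then p t else if t ≤ i + i' + 1 then q (i + i' + 1 - t) else tp
          with hcf
        have cdefp : ∀ t, t ≤ i → cf t = p t := by
          intro t ht; simp only [hcf]; rw [if_pos ht]
        have cdefq : ∀ t, i < t → t ≤ i + i' + 1 → cf t = q (i + i' + 1 - t) := by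
          intro t ht ht2; simp only [hcf]; rw [if_neg (by omega), if_pos ht2]
        have cdeft : ∀ t, i + i' + 1 < t → cf t = tp := by
          intro t ht; simp only [hcf]; rw [if_neg (by omega), if_neg (by omega)]
        obtain ⟨t1, t2, ht12, ht2n, hadjc, hnsucc, hnwrap⟩ := by
          refine chord' hG (n := n) (by omega) cf ?_ ?_ ?_
          · intro a ha b hb he
            rcases show a ≤ i ∨ (i < a ∧ a ≤ i+i'+1) ∨ a = i+i'+2 by omega
              with ha' | ha' | ha' <;>
              rcases show b ≤ i ∨ (i < b ∧ b ≤ i+i'+1) ∨ b = i+i'+2 by omega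
                with hb' | hb' | hb'
            · rw [cdefp a ha', cdefp b hb'] at he
              exact hpinj a b ha' hb' he
            · rw [cdefp a ha', cdefq b hb'.1 hb'.2] at he
              by_cases hx : a = i ∧ i + i' + 1 - b = i'
              · exfalso; rw [hx.1, hx.2] at he; exact hpiq he
              · exact absurd he (hdisj a ha' _ (by omega) hx)
            · rw [cdefp a ha', hb', cdeft _ (by omega)] at he
              exact absurd he (htp a ha')
            · rw [cdefq a ha'.1 ha'.2, cdefp b hb'] at he
              by_cases hx : b = i ∧ i + i' + 1 - a = i'
              · exfalso; rw [hx.1, hx.2] at he; exact hpiq he.symm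
              · exact absurd he.symm (hdisj b hb' _ (by omega) hx)
            · rw [cdefq a ha'.1 ha'.2, cdefq b hb'.1 hb'.2] at he
              have := hqinj _ _ (by omega) (by omega) he
              omega
            · rw [cdefq a ha'.1 ha'.2, hb', cdeft _ (by omega)] at he
              exact absurd he (htq _ (by omega))
            · rw [ha', cdeft _ (by omega), cdefp b hb'] at he
              exact absurd he.symm (htp b hb')
            · rw [ha', cdeft _ (by omega), cdefq b hb'.1 hb'.2] at he
              exact absurd he.symm (htq _ (by omega))
            · omega
          · intro t ht
            rcases show t < i ∨ t = i ∨ (i < t ∧ t < i+i'+1) ∨ t = i+i'+1 by omega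
              with h | h | h | h
            · rw [cdefp t (by omega), cdefp (t+1) (by omega)]
              exact hpa t h
            · rw [cdefp t (by omega), cdefq (t+1) (by omega) (by omega), h]
              rw [show i + i' + 1 - (i + 1) = i' by omega]
              exact hadjE
            · rw [cdefq t h.1 (by omega), cdefq (t+1) (by omega) (by omega)]
              have := (hqa (i + i' + 1 - t - 1) (by omega)).symm
              rw [show i + i' + 1 - t - 1 + 1 = i + i' + 1 - t by omega] at this
              rw [show i + i' + 1 - (t+1) = i + i' + 1 - t - 1 by omega]
              exact this
            · rw [h, cdefq (i+i'+1) (by omega) (by omega), cdeft (i+i'+2) (by omega),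
                  show i + i' + 1 - (i+i'+1) = 0 by omega]
              exact htv.symm
          · rw [show n - 1 = i+i'+2 by omega, cdeft (i+i'+2) (by omega), cdefp 0 (by omega)]
            exact htu
        rcases show t2 ≤ i ∨ (i < t2 ∧ t2 ≤ i+i'+1) ∨ t2 = i+i'+2 by omega with h2 | h2 | h2
        · exfalso
          rw [cdefp t1 (by omega), cdefp t2 h2] at hadjc
          have ha := adj_dist_le' hconn w hadjc
          have hb := adj_dist_le' hconn w hadjc.symm
          have h3 := hpd t1 (by omega)
          have h4 := hpd t2 h2
          omega
        · rcases show t1 ≤ i ∨ (i < t1 ∧ t1 ≤ i+i'+1) by omega with h1 | h1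
          · rw [cdefp t1 h1, cdefq t2 h2.1 h2.2] at hadjc
            set r := i + i' + 1 - t2 with hr_def
            have hri : r ≤ i' := by omega
            have hlev := hlevel t1 r h1 hri hadjc
            have hnotend : ¬(t1 = i ∧ r = i') := by
              intro ⟨hx1, hx2⟩
              exact hnsucc (by omega)
            by_cases hz1 : t1 = 0
            · subst hz1
              by_cases hr0 : r = 0
              · rw [hr0] at hadjc
                exact Or.inr hadjc
              · have hr1 : r = 1 := by omega
                refine Or.inl ⟨q 1, ?_, ?_, ?_⟩
                · rw [← hr1]; exact hadjc
                · exact hqa 0 (by omega)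
                · exact hqd 1 (by omega)
            · by_cases hz2 : r = 0
              · have ht1_1 : t1 = 1 := by omega
                refine Or.inl ⟨p 1, ?_, ?_, ?_⟩
                · exact hpa 0 (by omega)
                · rw [← ht1_1]
                  exact (hz2 ▸ hadjc).symm
                · exact hpd 1 (by omega)
              · refine IH t1 r p q (by omega) (by omega) (by omega) (by omega) (by omega)
                  hne0 htu htv htd
                  (fun t ht => hpa t (by omega)) (fun t ht => hpd t (by omega))
                  (fun t ht => hqa t (by omega)) (fun t ht => hqd t (by omega))
                  (Or.inr hadjc)
          · exfalso
            rw [cdefq t1 h1.1 h1.2, cdefq t2 h2.1 h2.2] at hadjc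
            have ha := adj_dist_le' hconn w hadjc
            have hb := adj_dist_le' hconn w hadjc.symm
            have h3 := hqd (i + i' + 1 - t1) (by omega)
            have h4 := hqd (i + i' + 1 - t2) (by omega)
            omega
        · exfalso
          rcases show t1 ≤ i ∨ (i < t1 ∧ t1 ≤ i+i'+1) by omega with h1 | h1
          · have ht1pos : 1 ≤ t1 := by
              rcases Nat.eq_zero_or_pos t1 with h0 | h0
              · exfalso; exact hnwrap ⟨h0, by omega⟩
              · exact h0
            rw [cdefp t1 h1, h2, cdeft _ (by omega)] at hadjc
            exact hlevtp t1 ht1pos h1 hadjc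
          · have ht1lt : t1 < i+i'+1 := by omega
            rw [cdefq t1 h1.1 h1.2, h2, cdeft _ (by omega)] at hadjc
            exact hlevtq (i + i' + 1 - t1) (by omega) (by omega) hadjc
/-- Triangle condition in connected chordal graphs. -/
lemma triangle_cond (hconn : G.Connected) (hG : G.IsChordal) {w u v : V}
    (huv : G.Adj u v) (hd : G.dist w u = G.dist w v) (hk : 1 ≤ G.dist w u) :
    ∃ z, G.Adj u z ∧ G.Adj v z ∧ G.dist w z + 1 = G.dist w u := by
  obtain ⟨p, hp0, hpk, hpa, hpd, -⟩ := exists_chain' hconn u w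
  obtain ⟨q, hq0, hqk, hqa, hqd, -⟩ := exists_chain' hconn v w
  have hku : G.dist u w = G.dist w u := SimpleGraph.dist_comm
  have hkv : G.dist v w = G.dist w u := (SimpleGraph.dist_comm).trans hd.symm
  rw [hku] at hpk hpa hpd
  rw [hkv] at hqk hqa hqd
  have := tc_aux hconn hG w (G.dist w u) (2 * G.dist w u) (G.dist w u) (G.dist w u) p q
    (by omega) hk (le_refl _) hk (le_refl _)
    (by rw [hp0, hq0]; exact huv) hpa hpd hqa hqd (Or.inl (hpk.trans hqk.symm))
  rwa [hp0, hq0] at this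

/-- Quadrangle condition in connected chordal graphs. -/
lemma quad_cond (hconn : G.Connected) (hG : G.IsChordal) {w u v tp : V}
    (huv : G.dist u v = 2) (htu : G.Adj tp u) (htv : G.Adj tp v)
    (hd : G.dist w u = G.dist w v) (htd : G.dist w tp = G.dist w u + 1) :
    ∃ z, G.Adj u z ∧ G.Adj v z ∧ G.dist w z + 1 = G.dist w u := by
  have hne : u ≠ v := by
    intro h
    rw [h, SimpleGraph.dist_self] at huv
    omega
  have hk : 1 ≤ G.dist w u := by
    by_contra h
    have h1 : w = u := hconn.dist_eq_zero_iff.mp (by omega)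
    have h2 : w = v := hconn.dist_eq_zero_iff.mp (by omega)
    exact hne (h1 ▸ h2)
  obtain ⟨p, hp0, hpk, hpa, hpd, -⟩ := exists_chain' hconn u w
  obtain ⟨q, hq0, hqk, hqa, hqd, -⟩ := exists_chain' hconn v w
  have hku : G.dist u w = G.dist w u := SimpleGraph.dist_comm
  have hkv : G.dist v w = G.dist w u := (SimpleGraph.dist_comm).trans hd.symm
  rw [hku] at hpk hpa hpd
  rw [hkv] at hqk hqa hqd
  have hres := qc_aux hconn hG w tp (G.dist w u) (2 * G.dist w u) (G.dist w u) (G.dist w u) p q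
    (by omega) hk (le_refl _) hk (le_refl _)
    (by rw [hp0, hq0]; exact hne)
    (by rw [hp0]; exact htu) (by rw [hq0]; exact htv) htd
    hpa hpd hqa hqd (Or.inl (hpk.trans hqk.symm))
  rcases hres with h | h
  · rwa [hp0, hq0] at h
  · exfalso
    rw [hp0, hq0] at h
    have : G.dist u v = 1 := SimpleGraph.dist_eq_one_iff_adj.mpr h
    omega

/-- A simplicial vertex is never strictly between two other vertices. -/
lemma s_not_between (hconn : G.Connected) {s : V} (hsimp : G.IsSimplicialVertex s)
    {u v : V} (hu : u ≠ s) (hv : v ≠ s) (huv : u ≠ v) :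
    G.dist u s + G.dist s v ≠ G.dist u v := by
  intro hE
  have d1 : 0 < G.dist u s := hconn.pos_dist_of_ne hu
  have d2 : 0 < G.dist v s := hconn.pos_dist_of_ne hv
  have hsv : G.dist s v = G.dist v s := SimpleGraph.dist_comm
  obtain ⟨p, hp0, hpk, hpa, hpd, hpu⟩ := exists_chain' hconn u s
  obtain ⟨q, hq0, hqk, hqa, hqd, hqu⟩ := exists_chain' hconn v s
  set a := p (G.dist u s - 1) with ha_def
  set b := q (G.dist v s - 1) with hb_def
  have hadj_as : G.Adj a s := by
    have := hpa (G.dist u s - 1) (by omega)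
    rwa [show G.dist u s - 1 + 1 = G.dist u s by omega, hpk] at this
  have hadj_bs : G.Adj b s := by
    have := hqa (G.dist v s - 1) (by omega)
    rwa [show G.dist v s - 1 + 1 = G.dist v s by omega, hqk] at this
  have hua : G.dist u a ≤ G.dist u s - 1 := hpu _ (by omega)
  have hvb : G.dist v b ≤ G.dist v s - 1 := hqu _ (by omega)
  by_cases hab : a = b
  · rw [hab] at hua
    have h1 := hconn.dist_triangle (u := u) (v := b) (w := v)
    have h2 : G.dist b v = G.dist v b := SimpleGraph.dist_comm
    omega
  · have hadj_ab : G.Adj a b := hsimp a b hadj_as.symm hadj_bs.symm hab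
    have h1 := hconn.dist_triangle (u := u) (v := a) (w := v)
    have h2 := hconn.dist_triangle (u := a) (v := b) (w := v)
    have h3 : G.dist a b = 1 := SimpleGraph.dist_eq_one_iff_adj.mpr hadj_ab
    have h4 : G.dist b v = G.dist v b := SimpleGraph.dist_comm
    omega

/-- Membership in a line through the simplicial vertex `s`. -/
lemma mem_line_iff (hconn : G.Connected) {s : V} (hsimp : G.IsSimplicialVertex s)
    {x : V} (hsx : s ≠ x) {p : V} (hps : p ≠ s) :
    p ∈ G.line s x ↔
      (G.dist s p + G.dist p x = G.dist s x ∨ G.dist s x + G.dist x p = G.dist s p) := by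
  simp only [SimpleGraph.line, SimpleGraph.Btw, Set.mem_union, Set.mem_insert_iff,
    Set.mem_singleton_iff, Set.mem_setOf_eq]
  constructor
  · rintro ((hp | hp) | (⟨h1, h2, h3, h4⟩ | ⟨h1, h2, h3, h4⟩ | ⟨h1, h2, h3, h4⟩))
    · exact absurd hp hps
    · subst hp
      left
      rw [SimpleGraph.dist_self]
      omega
    · exact absurd h4 (s_not_between hconn hsimp h1 (Ne.symm h2) h3)
    · exact Or.inl h4
    · exact Or.inr h4
  · intro h
    by_cases hpx : p = x
    · exact Or.inl (Or.inr hpx)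
    · rcases h with h | h
      · exact Or.inr (Or.inr (Or.inl ⟨Ne.symm hps, hpx, hsx, h⟩))
      · exact Or.inr (Or.inr (Or.inr ⟨hsx, fun hx => hpx hx.symm, Ne.symm hps, h⟩))
lemma left_mem_line (u v : V) : u ∈ G.line u v :=
  Set.mem_union_left _ (by simp)

lemma right_mem_line (u v : V) : v ∈ G.line u v :=
  Set.mem_union_left _ (by simp)

lemma btw_mem_line {u v p : V} (h : G.Btw p u v ∨ G.Btw u p v ∨ G.Btw u v p) :
    p ∈ G.line u v :=
  Set.mem_union_right _ h

lemma line_comm (u v : V) : G.line u v = G.line v u := by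
  have hc : ∀ a b : V, G.dist a b = G.dist b a := fun a b => SimpleGraph.dist_comm
  ext p
  simp only [SimpleGraph.line, SimpleGraph.Btw, Set.mem_union, Set.mem_insert_iff,
    Set.mem_singleton_iff, Set.mem_setOf_eq]
  constructor
  · rintro ((h | h) | (⟨h1, h2, h3, h4⟩ | ⟨h1, h2, h3, h4⟩ | ⟨h1, h2, h3, h4⟩))
    · exact Or.inl (Or.inr h)
    · exact Or.inl (Or.inl h)
    · refine Or.inr (Or.inr (Or.inr ⟨by first | exact Ne.symm h1 | exact Ne.symm h2 | exact Ne.symm h3 | exact h1 | exact h2 | exact h3, by first | exact Ne.symm h1 | exact Ne.symm h2 | exact Ne.symm h3 | exact h1 | exact h2 | exact h3, by first | exact Ne.symm h1 | exact Ne.symm h2 | exact Ne.symm h3 | exact h1 | exact h2 | exact h3, ?_⟩))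
      have e1 := hc v u; have e2 := hc u p; have e3 := hc v p
      have e4 := hc p u; have e5 := hc u v; have e6 := hc p v
      omega
    · refine Or.inr (Or.inr (Or.inl ⟨by first | exact Ne.symm h1 | exact Ne.symm h2 | exact Ne.symm h3 | exact h1 | exact h2 | exact h3, by first | exact Ne.symm h1 | exact Ne.symm h2 | exact Ne.symm h3 | exact h1 | exact h2 | exact h3, by first | exact Ne.symm h1 | exact Ne.symm h2 | exact Ne.symm h3 | exact h1 | exact h2 | exact h3, ?_⟩))
      have e1 := hc v p; have e2 := hc p u; have e3 := hc v u
      have e4 := hc u p; have e5 := hc p v; have e6 := hc u v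
      omega
    · refine Or.inr (Or.inl ⟨by first | exact Ne.symm h1 | exact Ne.symm h2 | exact Ne.symm h3 | exact h1 | exact h2 | exact h3, by first | exact Ne.symm h1 | exact Ne.symm h2 | exact Ne.symm h3 | exact h1 | exact h2 | exact h3, by first | exact Ne.symm h1 | exact Ne.symm h2 | exact Ne.symm h3 | exact h1 | exact h2 | exact h3, ?_⟩)
      have e1 := hc p v; have e2 := hc v u; have e3 := hc p u
      have e4 := hc u v; have e5 := hc v p; have e6 := hc u p
      omega
  · rintro ((h | h) | (⟨h1, h2, h3, h4⟩ | ⟨h1, h2, h3, h4⟩ | ⟨h1, h2, h3, h4⟩))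
    · exact Or.inl (Or.inr h)
    · exact Or.inl (Or.inl h)
    · refine Or.inr (Or.inr (Or.inr ⟨by first | exact Ne.symm h1 | exact Ne.symm h2 | exact Ne.symm h3 | exact h1 | exact h2 | exact h3, by first | exact Ne.symm h1 | exact Ne.symm h2 | exact Ne.symm h3 | exact h1 | exact h2 | exact h3, by first | exact Ne.symm h1 | exact Ne.symm h2 | exact Ne.symm h3 | exact h1 | exact h2 | exact h3, ?_⟩))
      have e1 := hc u v; have e2 := hc v p; have e3 := hc u p
      have e4 := hc p v; have e5 := hc v u; have e6 := hc p u
      omega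
    · refine Or.inr (Or.inr (Or.inl ⟨by first | exact Ne.symm h1 | exact Ne.symm h2 | exact Ne.symm h3 | exact h1 | exact h2 | exact h3, by first | exact Ne.symm h1 | exact Ne.symm h2 | exact Ne.symm h3 | exact h1 | exact h2 | exact h3, by first | exact Ne.symm h1 | exact Ne.symm h2 | exact Ne.symm h3 | exact h1 | exact h2 | exact h3, ?_⟩))
      have e1 := hc u p; have e2 := hc p v; have e3 := hc u v
      have e4 := hc p u; have e5 := hc v p; have e6 := hc v u
      omega
    · refine Or.inr (Or.inl ⟨by first | exact Ne.symm h1 | exact Ne.symm h2 | exact Ne.symm h3 | exact h1 | exact h2 | exact h3, by first | exact Ne.symm h1 | exact Ne.symm h2 | exact Ne.symm h3 | exact h1 | exact h2 | exact h3, by first | exact Ne.symm h1 | exact Ne.symm h2 | exact Ne.symm h3 | exact h1 | exact h2 | exact h3, ?_⟩)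
      have e1 := hc p u; have e2 := hc u v; have e3 := hc p v
      have e4 := hc v u; have e5 := hc u p; have e6 := hc v p
      omega

lemma main_aux {V : Type*} [Fintype V] {G : SimpleGraph V} (hconn : G.Connected)
    (hG : G.IsChordal) {s x y : V} (hsx : s ≠ x) (hsy : s ≠ y) (hxy : x ≠ y)
    (hsimp : G.IsSimplicialVertex s) (hline : G.line s x = G.line s y)
    (hAB : G.dist s x < G.dist s y) :
    G.line x y = Set.univ := by
  have hA1 : 1 ≤ G.dist s x := hconn.pos_dist_of_ne hsx
  have hM1 : 1 ≤ G.dist x y := hconn.pos_dist_of_ne hxy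
  have hcyx : G.dist y x = G.dist x y := SimpleGraph.dist_comm
  -- x lies between s and y
  have hB : G.dist s x + G.dist x y = G.dist s y := by
    have hx_mem : x ∈ G.line s y := by rw [← hline]; exact right_mem_line s x
    have := (mem_line_iff hconn hsimp hsy (fun h => hsx h.symm)).mp hx_mem
    rcases this with h | h
    · exact h
    · omega
  have hcard : ∀ u v : V, G.dist u v < Fintype.card V := by
    intro u v
    obtain ⟨w, hw1, hw2⟩ := hconn.exists_path_of_dist u v
    have := hw1.length_lt
    omega
  have hCpos : 0 < Fintype.card V := Fintype.card_pos_iff.mpr ⟨x⟩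
  -- The key induction: vertices outside the line `sx` see `x` between them and `y`.
  have key : ∀ N : ℕ, ∀ p : V,
      G.dist p y * Fintype.card V + G.dist s p ≤ N →
      p ∉ G.line s x → G.dist p y = G.dist p x + G.dist x y := by
    intro N
    induction N with
    | zero =>
      intro p hμ hpL
      exfalso
      have h0 : G.dist p y * Fintype.card V = 0 := by omega
      rcases Nat.mul_eq_zero.mp h0 with h1 | h1
      · have h2 : p = y := hconn.dist_eq_zero_iff.mp h1
        apply hpL
        rw [h2, hline]
        exact right_mem_line s y
      · omega
    | succ N IH =>
      intro p hμ hpL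
      have hps : p ≠ s := fun h => hpL (by rw [h]; exact left_mem_line s x)
      have hpx : p ≠ x := fun h => hpL (by rw [h]; exact right_mem_line s x)
      have hpLy : p ∉ G.line s y := fun h => hpL (by rw [hline]; exact h)
      have hpy : p ≠ y := fun h => hpLy (by rw [h]; exact right_mem_line s y)
      have hfx1 : G.dist s p + G.dist p x ≠ G.dist s x :=
        fun h => hpL ((mem_line_iff hconn hsimp hsx hps).mpr (Or.inl h))
      have hfx2 : G.dist s x + G.dist x p ≠ G.dist s p :=
        fun h => hpL ((mem_line_iff hconn hsimp hsx hps).mpr (Or.inr h))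
      have hfy1 : G.dist s p + G.dist p y ≠ G.dist s y :=
        fun h => hpLy ((mem_line_iff hconn hsimp hsy hps).mpr (Or.inl h))
      have hfy2 : G.dist s y + G.dist y p ≠ G.dist s p :=
        fun h => hpLy ((mem_line_iff hconn hsimp hsy hps).mpr (Or.inr h))
      -- commutations and triangle inequalities
      have cxp : G.dist x p = G.dist p x := SimpleGraph.dist_comm
      have cyp : G.dist y p = G.dist p y := SimpleGraph.dist_comm
      have t1 : G.dist p x ≤ G.dist p y + G.dist y x := hconn.dist_triangle
      have t2 : G.dist p y ≤ G.dist p x + G.dist x y := hconn.dist_triangle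
      have r1 : G.dist s x ≤ G.dist s p + G.dist p x := hconn.dist_triangle
      have r2 : G.dist s p ≤ G.dist s x + G.dist x p := hconn.dist_triangle
      have r3 : G.dist s y ≤ G.dist s p + G.dist p y := hconn.dist_triangle
      have r4 : G.dist s p ≤ G.dist s y + G.dist y p := hconn.dist_triangle
      have hKpos : 1 ≤ G.dist s p := hconn.pos_dist_of_ne (fun h => hps h.symm)
      have hDYpos : 1 ≤ G.dist p y := hconn.pos_dist_of_ne hpy
      have hDXpos : 1 ≤ G.dist p x := hconn.pos_dist_of_ne hpx
      by_contra hgoal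
      -- neighbour of p towards y
      obtain ⟨c, hc0, hck, hca, hcd, -⟩ := exists_chain' hconn p y
      have hq_adj : G.Adj p (c 1) := by
        have := hca 0 (by omega)
        rwa [hc0] at this
      set q := c 1 with hq_def
      have hq_d : G.dist y q + 1 = G.dist p y := hcd 1 (by omega)
      have cqy : G.dist q y = G.dist y q := SimpleGraph.dist_comm
      have l1 : G.dist s p ≤ G.dist s q + 1 := adj_dist_le' hconn s hq_adj
      have l2 : G.dist s q ≤ G.dist s p + 1 := adj_dist_le' hconn s hq_adj.symm
      have lx1 : G.dist x p ≤ G.dist x q + 1 := adj_dist_le' hconn x hq_adj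
      have lx2 : G.dist x q ≤ G.dist x p + 1 := adj_dist_le' hconn x hq_adj.symm
      have cxq : G.dist x q = G.dist q x := SimpleGraph.dist_comm
      by_cases hqL : q ∈ G.line s x
      · -- q is on the line
        have hqs : q ≠ s := by
          intro h
          have hd1 : G.dist p s = 1 := SimpleGraph.dist_eq_one_iff_adj.mpr (h ▸ hq_adj)
          have hd2 : G.dist s y = G.dist y s := SimpleGraph.dist_comm
          refine s_not_between hconn hsimp hps (fun hh => hsy hh.symm) hpy ?_
          rw [hd1]
          rw [h] at hq_d
          omega
        have hq1 := (mem_line_iff hconn hsimp hsx hqs).mp hqL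
        have hq2 := (mem_line_iff hconn hsimp hsy hqs).mp (by rw [← hline]; exact hqL)
        have rq2 : G.dist s q ≤ G.dist s x + G.dist x q := hconn.dist_triangle
        have rq1 : G.dist s x ≤ G.dist s q + G.dist q x := hconn.dist_triangle
        rcases hq1 with hq1 | hq1 <;> rcases hq2 with hq2 | hq2
        · -- c1 : both "before": pure arithmetic contradiction
          omega
        · -- c2 : impossible
          omega
        · -- c3 : q between x and y region
          by_cases hJK : G.dist s q = G.dist s p
          · rcases Nat.lt_or_ge (G.dist s x) (G.dist s p) with hKA | hKA
            · -- TC at s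
              obtain ⟨z, hz1, hz2, hz3⟩ :=
                triangle_cond hconn hG hq_adj hJK.symm hKpos
              have hzs : z ≠ s := by
                intro h
                rw [h, SimpleGraph.dist_self] at hz3
                omega
              have zx1 : G.dist x p ≤ G.dist x z + 1 := adj_dist_le' hconn x hz1
              have zy1 : G.dist y z ≤ G.dist y q + 1 := adj_dist_le' hconn y hz2.symm
              have czx : G.dist z x = G.dist x z := SimpleGraph.dist_comm
              have czy : G.dist z y = G.dist y z := SimpleGraph.dist_comm
              have hzL : z ∉ G.line s x := by
                intro hz
                rcases (mem_line_iff hconn hsimp hsx hzs).mp hz with h | h <;> omega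
              have hzIH := IH z (by
                have hzy_le : G.dist z y ≤ G.dist p y := by omega
                have hmul : G.dist z y * Fintype.card V ≤ G.dist p y * Fintype.card V :=
                  Nat.mul_le_mul_right _ hzy_le
                omega) hzL
              omega
            · omega
          · omega
        · -- c4 : q beyond y region
          by_cases hJK : G.dist s q = G.dist s p
          · -- TC at s
            obtain ⟨z, hz1, hz2, hz3⟩ :=
              triangle_cond hconn hG hq_adj hJK.symm hKpos
            have hzs : z ≠ s := by
              intro h
              rw [h, SimpleGraph.dist_self] at hz3
              omega
            have zx1 : G.dist x p ≤ G.dist x z + 1 := adj_dist_le' hconn x hz1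
            have zy1 : G.dist y z ≤ G.dist y q + 1 := adj_dist_le' hconn y hz2.symm
            have czx : G.dist z x = G.dist x z := SimpleGraph.dist_comm
            have czy : G.dist z y = G.dist y z := SimpleGraph.dist_comm
            have hzL : z ∉ G.line s x := by
              intro hz
              rcases (mem_line_iff hconn hsimp hsx hzs).mp hz with h | h <;> omega
            have hzIH := IH z (by
              have hzy_le : G.dist z y ≤ G.dist p y := by omega
              have hmul : G.dist z y * Fintype.card V ≤ G.dist p y * Fintype.card V :=
                Nat.mul_le_mul_right _ hzy_le
              omega) hzL
            omega
          · by_cases hJK1 : G.dist s q = G.dist s p + 1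
            · -- the "beyond" case
              by_cases hDX : G.dist p x = G.dist q x
              · -- TC at x
                have hdx_eq : G.dist x p = G.dist x q := by omega
                obtain ⟨z, hz1, hz2, hz3⟩ :=
                  triangle_cond hconn hG hq_adj hdx_eq (by omega)
                have hsz_up : G.dist s z ≤ G.dist s x + G.dist x z := hconn.dist_triangle
                have hsz_lo : G.dist s q ≤ G.dist s z + 1 := adj_dist_le' hconn s hz2
                have hzs : z ≠ s := by
                  intro h
                  rw [h, SimpleGraph.dist_self] at hsz_lo
                  omega
                have hz_line : z ∈ G.line s x := by
                  refine (mem_line_iff hconn hsimp hsx hzs).mpr (Or.inr ?_)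
                  omega
                have hz_liney : z ∈ G.line s y := by rw [← hline]; exact hz_line
                have hzy := (mem_line_iff hconn hsimp hsy hzs).mp hz_liney
                have zy1 : G.dist y p ≤ G.dist y z + 1 := adj_dist_le' hconn y hz1
                have czy : G.dist z y = G.dist y z := SimpleGraph.dist_comm
                rcases hzy with h | h <;> omega
              · -- QC case
                have hqy1 : 1 ≤ G.dist q y := by omega
                obtain ⟨c2, hc20, hc2k, hc2a, hc2d, -⟩ := exists_chain' hconn q y
                have hu_adj : G.Adj q (c2 1) := by
                  have := hc2a 0 (by omega)
                  rwa [hc20] at this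
                set u' := c2 1 with hu_def
                have hu_d : G.dist y u' + 1 = G.dist q y := hc2d 1 (by omega)
                have su1 : G.dist s q ≤ G.dist s u' + 1 := adj_dist_le' hconn s hu_adj
                have su2 : G.dist s u' ≤ G.dist s y + G.dist y u' := hconn.dist_triangle
                have xu1 : G.dist x u' ≤ G.dist x y + G.dist y u' := hconn.dist_triangle
                have xp1 : G.dist x p ≤ G.dist x u' + G.dist u' p := hconn.dist_triangle
                have pu1 : G.dist p u' ≤ G.dist p q + G.dist q u' := hconn.dist_triangle
                have hpq1 : G.dist p q = 1 := SimpleGraph.dist_eq_one_iff_adj.mpr hq_adj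
                have hqu1 : G.dist q u' = 1 := SimpleGraph.dist_eq_one_iff_adj.mpr hu_adj
                have cup : G.dist u' p = G.dist p u' := SimpleGraph.dist_comm
                have hpu2 : G.dist p u' = 2 := by omega
                have hsu : G.dist s p = G.dist s u' := by omega
                obtain ⟨z, hz1, hz2, hz3⟩ :=
                  quad_cond hconn hG hpu2 hq_adj.symm hu_adj hsu (by omega)
                have hzs : z ≠ s := by
                  intro h
                  rw [h, SimpleGraph.dist_self] at hz3
                  omega
                have zx1 : G.dist x p ≤ G.dist x z + 1 := adj_dist_le' hconn x hz1
                have zy1 : G.dist y z ≤ G.dist y u' + 1 := adj_dist_le' hconn y hz2.symm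
                have czx : G.dist z x = G.dist x z := SimpleGraph.dist_comm
                have czy : G.dist z y = G.dist y z := SimpleGraph.dist_comm
                have hzL : z ∉ G.line s x := by
                  intro hz
                  rcases (mem_line_iff hconn hsimp hsx hzs).mp hz with h | h <;> omega
                have hzIH := IH z (by
                  have hzy_le : G.dist z y ≤ G.dist p y := by omega
                  have hmul : G.dist z y * Fintype.card V ≤ G.dist p y * Fintype.card V :=
                    Nat.mul_le_mul_right _ hzy_le
                  omega) hzL
                omega
            · omega
      · -- q is not on the line: induction hypothesis applies to q
        have hμq : G.dist q y * Fintype.card V + G.dist s q ≤ N := by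
          have h1 : G.dist q y + 1 ≤ G.dist p y := by omega
          have hmul : (G.dist q y + 1) * Fintype.card V ≤ G.dist p y * Fintype.card V :=
            Nat.mul_le_mul_right _ h1
          rw [Nat.add_mul, one_mul] at hmul
          have := hcard s q
          omega
        have hqIH := IH q hμq hqL
        omega
  -- Conclusion
  apply Set.eq_univ_iff_forall.mpr
  intro p
  by_cases hpx : p = x
  · rw [hpx]; exact left_mem_line x y
  by_cases hpy : p = y
  · rw [hpy]; exact right_mem_line x y
  by_cases hpL : p ∈ G.line s x
  · by_cases hps : p = s
    · subst hps
      exact btw_mem_line (Or.inl ⟨hsx, hxy, hsy, hB⟩)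
    · have h1 := (mem_line_iff hconn hsimp hsx hps).mp hpL
      have h2 := (mem_line_iff hconn hsimp hsy hps).mp (by rw [← hline]; exact hpL)
      have cxp : G.dist x p = G.dist p x := SimpleGraph.dist_comm
      have cyp : G.dist y p = G.dist p y := SimpleGraph.dist_comm
      have t1 : G.dist p x ≤ G.dist p y + G.dist y x := hconn.dist_triangle
      have t2 : G.dist p y ≤ G.dist p x + G.dist x y := hconn.dist_triangle
      have trich : G.dist p x + G.dist x y = G.dist p y ∨
          G.dist x p + G.dist p y = G.dist x y ∨
          G.dist x y + G.dist y p = G.dist x p := by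
        rcases h1 with h1 | h1 <;> rcases h2 with h2 | h2 <;> omega
      rcases trich with h | h | h
      · exact btw_mem_line (Or.inl ⟨hpx, hxy, hpy, h⟩)
      · exact btw_mem_line (Or.inr (Or.inl ⟨fun hh => hpx hh.symm, hpy, hxy, h⟩))
      · exact btw_mem_line (Or.inr (Or.inr ⟨hxy, fun hh => hpy hh.symm, fun hh => hpx hh.symm, h⟩))
  · have := key (G.dist p y * Fintype.card V + G.dist s p) p le_rfl hpL
    exact btw_mem_line (Or.inl ⟨hpx, hxy, hpy, this.symm⟩)

end StmtAux

/-- Lemma 2: in a finite connected chordal graph, if `s` is simplicial, the vertices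
`s`, `x`, `y` are distinct, and the lines `sx` and `sy` coincide, then the line `xy`
consists of all vertices of the graph. -/
theorem stmt2 {V : Type*} [Fintype V] (G : SimpleGraph V) (hconn : G.Connected)
    (hG : G.IsChordal) (s x y : V) (hsx : s ≠ x) (hsy : s ≠ y) (hxy : x ≠ y)
    (hsimp : G.IsSimplicialVertex s) (hline : G.line s x = G.line s y) :
    G.line x y = Set.univ := by
  have hx_mem : x ∈ G.line s y := by rw [← hline]; exact StmtAux.right_mem_line s x
  have hM1 : 1 ≤ G.dist x y := hconn.pos_dist_of_ne hxy
  have h := (StmtAux.mem_line_iff hconn hsimp hsy (fun h => hsx h.symm)).mp hx_mem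
  have hcyx : G.dist y x = G.dist x y := SimpleGraph.dist_comm
  rcases Nat.lt_trichotomy (G.dist s x) (G.dist s y) with hlt | heq | hgt
  · exact StmtAux.main_aux hconn hG hsx hsy hxy hsimp hline hlt
  · exfalso
    rcases h with h | h <;> omega
  · have := StmtAux.main_aux hconn hG hsy hsx (Ne.symm hxy) hsimp hline.symm hgt
    rw [StmtAux.line_comm x y]
    exact this
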